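/- Pythagorean identity for diagonal averaging: for any matrix of ordered pairs Y and any Hankel matrix of ordered pairs H, ‖Y − H‖_C² = ‖Y − H*‖_C² + ‖H* − H‖_C², where H* is the antidiagonal average of Y; consequently H* is the unique minimizer of ‖Y − H‖_C over Hankel matrices of ordered pairs. -/

import Mathlib

open Finset

/-- The C-norm of an l×k matrix of ordered pairs (A,B). -/
noncomputable def Cnorm {l k : ℕ} (A B : Fin l → Fin k → ℝ) : ℝ :=
  Real.sqrt ((1/2) * ∑ i : Fin l, ∑ j : Fin k, (A i j ^ 2 + B i j ^ 2))

/-- Hankel matrix of ordered pairs: entries coincide on antidiagonals. -/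
def IsHankel {l k : ℕ} (A B : Fin l → Fin k → ℝ) : Prop :=
  ∀ (i i' : Fin l) (j j' : Fin k), (i : ℕ) + (j : ℕ) = (i' : ℕ) + (j' : ℕ) →
    A i j = A i' j' ∧ B i j = B i' j'

/-- Index pairs on the antidiagonal i + j = s (zero-based). -/
def antidiag (l k s : ℕ) : Finset (Fin l × Fin k) :=
  Finset.univ.filter (fun p => (p.1 : ℕ) + (p.2 : ℕ) = s)

/-- Antidiagonal averaging of a real matrix. -/
noncomputable def diagAvg {l k : ℕ} (A : Fin l → Fin k → ℝ) : Fin l → Fin k → ℝ :=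
  fun i j => (∑ p ∈ antidiag l k ((i : ℕ) + (j : ℕ)), A p.1 p.2) /
    (antidiag l k ((i : ℕ) + (j : ℕ))).card

lemma mem_antidiag {l k s : ℕ} {p : Fin l × Fin k} :
    p ∈ antidiag l k s ↔ (p.1 : ℕ) + (p.2 : ℕ) = s := by
  simp [antidiag]

lemma diagAvg_eq {l k s : ℕ} (A : Fin l → Fin k → ℝ) {p : Fin l × Fin k}
    (hp : p ∈ antidiag l k s) :
    diagAvg A p.1 p.2 = (∑ q ∈ antidiag l k s, A q.1 q.2) / (antidiag l k s).card := by
  rw [diagAvg, mem_antidiag.1 hp]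

lemma sum_sub_avg {l k s : ℕ} (A : Fin l → Fin k → ℝ) :
    ∑ p ∈ antidiag l k s, (A p.1 p.2 - diagAvg A p.1 p.2) = 0 := by
  rcases (antidiag l k s).eq_empty_or_nonempty with h | h
  · simp [h]
  · have hc : ((antidiag l k s).card : ℝ) ≠ 0 := by
      exact_mod_cast (Finset.card_pos.2 h).ne'
    rw [Finset.sum_sub_distrib, Finset.sum_congr rfl (fun p hp => diagAvg_eq A hp),
      Finset.sum_const, nsmul_eq_mul]
    field_simp
    ring

lemma double_sum_fiber {l k : ℕ} (f : Fin l → Fin k → ℝ) :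
    ∑ i : Fin l, ∑ j : Fin k, f i j =
      ∑ s ∈ Finset.range (l + k), ∑ p ∈ antidiag l k s, f p.1 p.2 := by
  have := (Finset.sum_fiberwise_of_maps_to (s := (Finset.univ : Finset (Fin l × Fin k)))
    (t := Finset.range (l + k)) (g := fun p => (p.1 : ℕ) + (p.2 : ℕ))
    (fun p _ => Finset.mem_range.2 (by show (p.1:ℕ)+(p.2:ℕ) < l+k; have := p.1.isLt; have := p.2.isLt; omega))
    (fun p => f p.1 p.2))
  have h2 : ∑ i : Fin l, ∑ j : Fin k, f i j = ∑ p : Fin l × Fin k, f p.1 p.2 := by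
    rw [← Finset.sum_product', Finset.univ_product_univ]
  rw [h2, ← this]
  rfl

lemma cross_zero {l k : ℕ} (A H : Fin l → Fin k → ℝ)
    (hH : ∀ (i i' : Fin l) (j j' : Fin k), (i : ℕ) + (j : ℕ) = (i' : ℕ) + (j' : ℕ) →
      H i j = H i' j') :
    ∑ i : Fin l, ∑ j : Fin k, (A i j - diagAvg A i j) * (diagAvg A i j - H i j) = 0 := by
  rw [double_sum_fiber]
  apply Finset.sum_eq_zero
  intro s _
  rcases (antidiag l k s).eq_empty_or_nonempty with h | ⟨p0, hp0⟩
  · simp [h]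
  · have : ∀ p ∈ antidiag l k s,
        (A p.1 p.2 - diagAvg A p.1 p.2) * (diagAvg A p.1 p.2 - H p.1 p.2)
        = (A p.1 p.2 - diagAvg A p.1 p.2) *
          ((∑ q ∈ antidiag l k s, A q.1 q.2) / (antidiag l k s).card - H p0.1 p0.2) := by
      intro p hp
      rw [diagAvg_eq A hp, hH p.1 p0.1 p.2 p0.2 (by rw [mem_antidiag.1 hp, mem_antidiag.1 hp0])]
    rw [Finset.sum_congr rfl this, ← Finset.sum_mul]
    have : ∑ p ∈ antidiag l k s, (A p.1 p.2 - diagAvg A p.1 p.2) = 0 := sum_sub_avg A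
    rw [this, zero_mul]

lemma pyth_sum {l k : ℕ} (A H : Fin l → Fin k → ℝ)
    (hH : ∀ (i i' : Fin l) (j j' : Fin k), (i : ℕ) + (j : ℕ) = (i' : ℕ) + (j' : ℕ) →
      H i j = H i' j') :
    ∑ i : Fin l, ∑ j : Fin k, (A i j - H i j) ^ 2 =
      (∑ i : Fin l, ∑ j : Fin k, (A i j - diagAvg A i j) ^ 2) +
      (∑ i : Fin l, ∑ j : Fin k, (diagAvg A i j - H i j) ^ 2) := by
  have hc := cross_zero A H hH
  have key : ∀ i : Fin l, ∀ j : Fin k, (A i j - H i j) ^ 2 =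
      ((A i j - diagAvg A i j) ^ 2 + (diagAvg A i j - H i j) ^ 2) +
      2 * ((A i j - diagAvg A i j) * (diagAvg A i j - H i j)) := by
    intro i j; ring
  calc ∑ i : Fin l, ∑ j : Fin k, (A i j - H i j) ^ 2
      = ∑ i : Fin l, ∑ j : Fin k, (((A i j - diagAvg A i j) ^ 2 + (diagAvg A i j - H i j) ^ 2) +
        2 * ((A i j - diagAvg A i j) * (diagAvg A i j - H i j))) := by
        exact Finset.sum_congr rfl fun i _ => Finset.sum_congr rfl fun j _ => key i j
    _ = (∑ i : Fin l, ∑ j : Fin k, (A i j - diagAvg A i j) ^ 2) +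
        (∑ i : Fin l, ∑ j : Fin k, (diagAvg A i j - H i j) ^ 2) +
        2 * ∑ i : Fin l, ∑ j : Fin k, (A i j - diagAvg A i j) * (diagAvg A i j - H i j) := by
        simp_rw [Finset.sum_add_distrib, Finset.mul_sum]
    _ = _ := by rw [hc]; ring

lemma Cnorm_sq {l k : ℕ} (X Y : Fin l → Fin k → ℝ) :
    Cnorm X Y ^ 2 = (1/2) * ∑ i : Fin l, ∑ j : Fin k, (X i j ^ 2 + Y i j ^ 2) :=
  Real.sq_sqrt (by positivity)

lemma Cnorm_nonneg {l k : ℕ} (X Y : Fin l → Fin k → ℝ) : 0 ≤ Cnorm X Y :=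
  Real.sqrt_nonneg _

/-- Pythagorean identity for diagonal averaging, and uniqueness of the minimizer. -/
theorem diagAvg_pythagoras {l k : ℕ} (A B HA HB : Fin l → Fin k → ℝ)
    (hH : IsHankel HA HB) :
    (Cnorm (fun i j => A i j - HA i j) (fun i j => B i j - HB i j)) ^ 2 =
      (Cnorm (fun i j => A i j - diagAvg A i j) (fun i j => B i j - diagAvg B i j)) ^ 2 +
      (Cnorm (fun i j => diagAvg A i j - HA i j) (fun i j => diagAvg B i j - HB i j)) ^ 2 ∧
    (¬ (HA = diagAvg A ∧ HB = diagAvg B) →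
      Cnorm (fun i j => A i j - diagAvg A i j) (fun i j => B i j - diagAvg B i j) <
      Cnorm (fun i j => A i j - HA i j) (fun i j => B i j - HB i j)) := by
  have hHA : ∀ (i i' : Fin l) (j j' : Fin k), (i : ℕ) + (j : ℕ) = (i' : ℕ) + (j' : ℕ) →
      HA i j = HA i' j' := fun i i' j j' h => (hH i i' j j' h).1
  have hHB : ∀ (i i' : Fin l) (j j' : Fin k), (i : ℕ) + (j : ℕ) = (i' : ℕ) + (j' : ℕ) →
      HB i j = HB i' j' := fun i i' j j' h => (hH i i' j j' h).2
  have hpA := pyth_sum A HA hHA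
  have hpB := pyth_sum B HB hHB
  have hmain : (Cnorm (fun i j => A i j - HA i j) (fun i j => B i j - HB i j)) ^ 2 =
      (Cnorm (fun i j => A i j - diagAvg A i j) (fun i j => B i j - diagAvg B i j)) ^ 2 +
      (Cnorm (fun i j => diagAvg A i j - HA i j) (fun i j => diagAvg B i j - HB i j)) ^ 2 := by
    rw [Cnorm_sq, Cnorm_sq, Cnorm_sq]
    simp_rw [Finset.sum_add_distrib]
    rw [hpA, hpB]
    ring
  refine ⟨hmain, fun hne => ?_⟩
  have hpos : 0 < (Cnorm (fun i j => diagAvg A i j - HA i j)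
      (fun i j => diagAvg B i j - HB i j)) ^ 2 := by
    rw [Cnorm_sq]
    rcases not_and_or.1 hne with h | h
    · obtain ⟨i, hi⟩ := Function.ne_iff.1 h
      obtain ⟨j, hj⟩ := Function.ne_iff.1 hi
      have h1 : 0 < (diagAvg A i j - HA i j) ^ 2 := by
        have : diagAvg A i j - HA i j ≠ 0 := sub_ne_zero.2 (Ne.symm hj)
        positivity
      have : 0 < ∑ i : Fin l, ∑ j : Fin k,
          ((diagAvg A i j - HA i j) ^ 2 + (diagAvg B i j - HB i j) ^ 2) := by
        apply Finset.sum_pos' (fun i _ => Finset.sum_nonneg fun j _ => by positivity)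
        refine ⟨i, Finset.mem_univ i, ?_⟩
        apply Finset.sum_pos' (fun j _ => by positivity)
        exact ⟨j, Finset.mem_univ j, by nlinarith [sq_nonneg (diagAvg B i j - HB i j)]⟩
      linarith
    · obtain ⟨i, hi⟩ := Function.ne_iff.1 h
      obtain ⟨j, hj⟩ := Function.ne_iff.1 hi
      have h1 : 0 < (diagAvg B i j - HB i j) ^ 2 := by
        have : diagAvg B i j - HB i j ≠ 0 := sub_ne_zero.2 (Ne.symm hj)
        positivity
      have : 0 < ∑ i : Fin l, ∑ j : Fin k,
          ((diagAvg A i j - HA i j) ^ 2 + (diagAvg B i j - HB i j) ^ 2) := by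
        apply Finset.sum_pos' (fun i _ => Finset.sum_nonneg fun j _ => by positivity)
        refine ⟨i, Finset.mem_univ i, ?_⟩
        apply Finset.sum_pos' (fun j _ => by positivity)
        exact ⟨j, Finset.mem_univ j, by nlinarith [sq_nonneg (diagAvg A i j - HA i j)]⟩
      linarith
  have hlt : (Cnorm (fun i j => A i j - diagAvg A i j) (fun i j => B i j - diagAvg B i j)) ^ 2 <
      (Cnorm (fun i j => A i j - HA i j) (fun i j => B i j - HB i j)) ^ 2 := by
    rw [hmain]; linarith
  exact lt_of_pow_lt_pow_left₀ 2 (Cnorm_nonneg _ _) hlt
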